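/- Let D ⊆ ℂ^d be a domain with the Liouville Property, let z₀ ∈ D, and let (Dₙ)_{n∈ℕ} be an exhaustion of D with z₀ ∈ D₁. Then for every z ∈ D, γₙ(z) → 0 as n → ∞ (γₙ(z) being defined for all n large enough that z ∈ Dₙ). -/

import Mathlib

open Filter Topology Metric

/-- `ℂ^d` with the Euclidean norm. -/
abbrev Cd (d : ℕ) := EuclideanSpace ℂ (Fin d)

variable {E : Type*} [NormedAddCommGroup E] [NormedSpace ℂ E]

/-- `supNorm f K = sup_{z ∈ K} |f z|`. -/
noncomputable def supNorm (f : E → ℂ) (K : Set E) : ℝ :=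
  sSup ((fun z => ‖f z‖) '' K)

/-- The series `∑ cₙ φₙ` converges to `f` uniformly on every compact subset of `D`. -/
def ExpandsTo (φ : ℕ → E → ℂ) (c : ℕ → ℂ) (f : E → ℂ) (D : Set E) : Prop :=
  ∀ K : Set E, K ⊆ D → IsCompact K →
    TendstoUniformlyOn (fun N z => ∑ n ∈ Finset.range N, c n * φ n z) f atTop K

/-- `φ` is a basis of the space of analytic functions on `D`: each `φₙ` is analytic on `D`
and every analytic function on `D` has a unique expansion converging uniformly on
compact subsets of `D`. -/
def IsBasisOn (φ : ℕ → E → ℂ) (D : Set E) : Prop :=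
  (∀ n, DifferentiableOn ℂ (φ n) D) ∧
    ∀ f : E → ℂ, DifferentiableOn ℂ f D → ∃! c : ℕ → ℂ, ExpandsTo φ c f D

/-- The Global Bohr Property of a basis `φ`, relative to `D`. -/
def HasGBP (φ : ℕ → E → ℂ) (D : Set E) : Prop :=
  ∀ K : Set E, K ⊆ D → IsCompact K →
    ∃ K₁ : Set E, K₁ ⊆ D ∧ IsCompact K₁ ∧ K ⊆ K₁ ∧
      ∀ (f : E → ℂ) (c : ℕ → ℂ), DifferentiableOn ℂ f D → ExpandsTo φ c f D →
        ∀ N : ℕ, ∑ n ∈ Finset.range N, ‖c n‖ * supNorm (φ n) K ≤ supNorm f K₁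

/-- Every bounded analytic function on `D` is constant. -/
def LiouvilleProperty (D : Set E) : Prop :=
  ∀ f : E → ℂ, DifferentiableOn ℂ f D → (∃ M : ℝ, ∀ z ∈ D, ‖f z‖ ≤ M) →
    ∀ z ∈ D, ∀ w ∈ D, f z = f w

/-- The Schwarz Property of a domain `D`. -/
def SchwarzProperty (D : Set E) : Prop :=
  ∀ z₀ ∈ D, ∀ K : Set E, K ⊆ D → IsCompact K → z₀ ∈ K → ∀ δ : ℝ, 0 < δ →
    ∃ K₁ : Set E, K₁ ⊆ D ∧ IsCompact K₁ ∧ K ⊆ K₁ ∧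
      ∀ (U : Set E) (f : E → ℂ), IsOpen U → K₁ ⊆ U → DifferentiableOn ℂ f U →
        supNorm (fun z => f z - f z₀) K ≤ δ * supNorm (fun z => f z - f z₀) K₁

/-- An exhaustion of `D` by relatively compact open sets. -/
def IsExhaustion (Dn : ℕ → Set E) (D : Set E) : Prop :=
  (∀ n, IsOpen (Dn n)) ∧ (∀ n, IsCompact (closure (Dn n))) ∧
    (∀ n, closure (Dn n) ⊆ Dn (n + 1)) ∧ (⋃ n, Dn n) = D

/-- `gammaFn U z₀ z = sup {|f z| : f analytic on U, f z₀ = 0, sup_U |f| ≤ 1}`. -/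
noncomputable def gammaFn (U : Set E) (z₀ z : E) : ℝ :=
  sSup {t : ℝ | ∃ f : E → ℂ, DifferentiableOn ℂ f U ∧ f z₀ = 0 ∧
    (∀ w ∈ U, ‖f w‖ ≤ 1) ∧ t = ‖f z‖}


lemma myLip {h : E → ℂ} {x y y' : E} {R ρ M : ℝ} (hρ : 0 < ρ)
    (hd : DifferentiableOn ℂ h (ball x R))
    (hb : ∀ w ∈ ball x R, ‖h w‖ ≤ M)
    (hsub : ball y ρ ⊆ ball x R) (hyy : ‖y' - y‖ < ρ) :
    dist (h y') (h y) ≤ (2 * M + 1) / ρ * ‖y' - y‖ := by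
  rcases eq_or_ne y' y with rfl | hne
  · simp
  set v := y' - y with hv
  have hv0 : 0 < ‖v‖ := by simpa [hv, sub_ne_zero] using hne
  set R₁ := ρ / ‖v‖ with hR₁
  have hR₁0 : 0 < R₁ := div_pos hρ hv0
  set g : ℂ → ℂ := fun t => h (y + t • v) with hg
  have hmapsE : ∀ t : ℂ, t ∈ ball (0:ℂ) R₁ → y + t • v ∈ ball x R := by
    intro t ht
    apply hsub
    simp only [mem_ball, dist_zero_right] at ht
    simp only [mem_ball, dist_eq_norm, add_sub_cancel_left, norm_smul]
    calc ‖t‖ * ‖v‖ < R₁ * ‖v‖ := by gcongr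
      _ = ρ := div_mul_cancel₀ _ hv0.ne'
  have hgd : DifferentiableOn ℂ g (ball 0 R₁) := by
    intro t ht
    have hdiff : DifferentiableAt ℂ (fun t : ℂ => y + t • v) t :=
      ((differentiable_id.smul_const v).const_add y).differentiableAt
    exact ((hd.differentiableAt (isOpen_ball.mem_nhds (hmapsE t ht))).comp t
      hdiff).differentiableWithinAt
  have hmaps : Set.MapsTo g (ball 0 R₁) (ball (g 0) (2*M+1)) := by
    intro t ht
    have h1 : ‖g t‖ ≤ M := hb _ (hmapsE t ht)
    have h2 : ‖g 0‖ ≤ M := hb _ (hmapsE 0 (mem_ball_self hR₁0))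
    simp only [mem_ball]
    calc dist (g t) (g 0) ≤ ‖g t‖ + ‖g 0‖ := dist_le_norm_add_norm _ _
      _ ≤ M + M := add_le_add h1 h2
      _ < 2*M+1 := by linarith
  have h1mem : (1:ℂ) ∈ ball (0:ℂ) R₁ := by
    simp only [mem_ball, dist_zero_right, norm_one]
    exact (one_lt_div hv0).mpr hyy
  have key := Complex.dist_le_div_mul_dist_of_mapsTo_ball hgd (hmaps.mono_right ball_subset_closedBall) h1mem
  have hg1 : g 1 = h y' := by simp [hg, hv]
  have hg0 : g 0 = h y := by simp [hg]
  rw [hg1, hg0] at key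
  calc dist (h y') (h y) ≤ (2*M+1) / R₁ * dist (1:ℂ) 0 := key
    _ = (2*M+1) / ρ * ‖v‖ := by
        rw [dist_zero_right, norm_one, mul_one, hR₁, div_div_eq_mul_div]
        ring

lemma myFderivBound {h : E → ℂ} {y : E} {ρ M : ℝ} (hρ : 0 < ρ) (hM : 0 ≤ M)
    (hd : DifferentiableOn ℂ h (ball y ρ)) (hb : ∀ w ∈ ball y ρ, ‖h w‖ ≤ M) :
    ‖fderiv ℂ h y‖ ≤ 2 * M / ρ := by
  have hy : DifferentiableAt ℂ h y :=
    hd.differentiableAt (isOpen_ball.mem_nhds (mem_ball_self hρ))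
  refine ContinuousLinearMap.opNorm_le_bound _ (by positivity) fun v => ?_
  rcases eq_or_ne v 0 with rfl | hv
  · simp
  have hv0 : 0 < ‖v‖ := norm_pos_iff.mpr hv
  set R₁ := ρ / ‖v‖ with hR₁
  have hR₁0 : 0 < R₁ := div_pos hρ hv0
  set g : ℂ → ℂ := fun t => h (y + t • v) with hg
  have hmapsE : ∀ t : ℂ, t ∈ ball (0:ℂ) R₁ → y + t • v ∈ ball y ρ := by
    intro t ht
    simp only [mem_ball, dist_zero_right] at ht
    simp only [mem_ball, dist_eq_norm, add_sub_cancel_left, norm_smul]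
    calc ‖t‖ * ‖v‖ < R₁ * ‖v‖ := by gcongr
      _ = ρ := div_mul_cancel₀ _ hv0.ne'
  have hgd : DifferentiableOn ℂ g (ball 0 R₁) := by
    intro t ht
    have hdiff : DifferentiableAt ℂ (fun t : ℂ => y + t • v) t :=
      ((differentiable_id.smul_const v).const_add y).differentiableAt
    exact ((hd.differentiableAt (isOpen_ball.mem_nhds (hmapsE t ht))).comp t
      hdiff).differentiableWithinAt
  have hder : HasDerivAt g (fderiv ℂ h y v) 0 := by
    have h1 : HasDerivAt (fun t : ℂ => y + t • v) v 0 := by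
      simpa using ((hasDerivAt_id (0:ℂ)).smul_const v).const_add y
    have h2 : HasFDerivAt h (fderiv ℂ h y) (y + (0:ℂ) • v) := by
      simpa using hy.hasFDerivAt
    have := h2.comp_hasDerivAt 0 h1
    exact this
  refine le_of_forall_pos_le_add fun δ hδ => ?_
  have hε' : 0 < δ * ρ / ‖v‖ := by positivity
  have hmaps : Set.MapsTo g (ball 0 R₁) (ball (g 0) (2*M + δ*ρ/‖v‖)) := by
    intro t ht
    have h1 : ‖g t‖ ≤ M := hb _ (hmapsE t ht)
    have h2 : ‖g 0‖ ≤ M := hb _ (hmapsE 0 (mem_ball_self hR₁0))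
    simp only [mem_ball]
    calc dist (g t) (g 0) ≤ ‖g t‖ + ‖g 0‖ := dist_le_norm_add_norm _ _
      _ ≤ M + M := add_le_add h1 h2
      _ < 2*M + δ*ρ/‖v‖ := by linarith
  have key := Complex.norm_deriv_le_div_of_mapsTo_ball hgd (hmaps.mono_right ball_subset_closedBall) hR₁0
  rw [hder.deriv] at key
  calc ‖fderiv ℂ h y v‖ ≤ (2*M + δ*ρ/‖v‖) / R₁ := key
    _ = 2 * M / ρ * ‖v‖ + δ := by
        rw [hR₁]
        field_simp

lemma myULim {X : Type*} [TopologicalSpace X] {𝒰 : Ultrafilter ℕ} {u : ℕ → X} {K : Set X}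
    (hK : IsCompact K) (h : ∀ᶠ n in (𝒰 : Filter ℕ), u n ∈ K) :
    ∃ x, Tendsto u 𝒰 (𝓝 x) := by
  obtain ⟨x, -, hx⟩ := hK.ultrafilter_le_nhds (𝒰.map u)
    (by rw [Ultrafilter.coe_map, le_principal_iff, mem_map]; exact h)
  exact ⟨x, by rwa [Ultrafilter.coe_map] at hx⟩

lemma myCompactSub {Dn : ℕ → Set E} {D K : Set E} (hopen : ∀ n, IsOpen (Dn n))
    (hmono : ∀ m n, m ≤ n → Dn m ⊆ Dn n) (hunion : (⋃ n, Dn n) = D)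
    (hK : IsCompact K) (hKD : K ⊆ D) : ∃ m, K ⊆ Dn m := by
  obtain ⟨t, ht⟩ := hK.elim_finite_subcover Dn hopen (hunion ▸ hKD)
  refine ⟨t.sup id, fun w hw => ?_⟩
  obtain ⟨i, hi, hwi⟩ := Set.mem_iUnion₂.mp (ht hw)
  exact hmono i (t.sup id) (Finset.le_sup (f := id) hi) hwi

lemma myNet {X ι : Type*} [PseudoMetricSpace X] {l : Filter ι} [l.NeBot]
    {G : ι → E → X} {g : E → X} {K : Set E}
    (hK : IsCompact K) {C ρ : ℝ} (hρ : 0 < ρ) (hC : 0 ≤ C)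
    (hlip : ∀ᶠ n in l, ∀ y ∈ K, ∀ y' ∈ K, dist y y' < ρ → dist (G n y) (G n y') ≤ C * dist y y')
    (hpt : ∀ y ∈ K, Tendsto (fun n => G n y) l (𝓝 (g y))) :
    TendstoUniformlyOn G g l K := by
  rw [Metric.tendstoUniformlyOn_iff]
  intro ε hε
  have hδ0 : 0 < min (ρ/2) (ε/(4*(C+1))) := by positivity
  set δ := min (ρ/2) (ε/(4*(C+1))) with hδdef
  obtain ⟨t, htK, hcov⟩ := hK.elim_nhds_subcover (fun k => ball k δ)
    (fun k _ => ball_mem_nhds k hδ0)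
  have hglip : ∀ y ∈ K, ∀ k ∈ K, dist y k < ρ → dist (g y) (g k) ≤ C * dist y k := by
    intro y hy k hk hd
    refine le_of_tendsto ((hpt y hy).dist (hpt k hk)) ?_
    filter_upwards [hlip] with n hn using hn y hy k hk hd
  have hptt : ∀ᶠ n in l, ∀ k ∈ t, dist (G n k) (g k) < ε/4 := by
    rw [Filter.eventually_all_finset]
    intro k hk
    exact Metric.tendsto_nhds.mp (hpt k (htK k hk)) (ε/4) (by positivity)
  filter_upwards [hlip, hptt] with n hn1 hn2 y hy
  obtain ⟨k, hkt, hky⟩ := Set.mem_iUnion₂.mp (hcov hy)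
  have hkK := htK k hkt
  have hdyk : dist y k < δ := mem_ball.mp hky
  have h1 : dist y k < ρ := hdyk.trans_le ((min_le_left _ _).trans (by linarith))
  have hCd : C * dist y k ≤ ε/4 := by
    have h2 : dist y k ≤ ε/(4*(C+1)) := hdyk.le.trans (min_le_right _ _)
    calc C * dist y k ≤ C * (ε/(4*(C+1))) := by
          exact mul_le_mul_of_nonneg_left h2 hC
      _ ≤ (C+1) * (ε/(4*(C+1))) := by
          have : (0:ℝ) ≤ ε/(4*(C+1)) := by positivity
          nlinarith
      _ = ε/4 := by field_simp
  have h1' : dist k y < ρ := by rwa [dist_comm]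
  calc dist (g y) (G n y)
      ≤ dist (g y) (g k) + dist (g k) (G n k) + dist (G n k) (G n y) :=
        dist_triangle4 _ _ _ _
    _ ≤ C * dist y k + ε/4 + C * dist k y := by
        have e1 := hglip y hy k hkK h1
        have e2 : dist (g k) (G n k) < ε/4 := by rw [dist_comm]; exact hn2 k hkt
        have e3 := hn1 k hkK y hy h1'
        exact add_le_add (add_le_add e1 e2.le) e3
    _ ≤ ε/4 + ε/4 + ε/4 := by
        rw [dist_comm k y]
        exact add_le_add (add_le_add hCd le_rfl) hCd
    _ < ε := by linarith

/-- if `D ⊆ ℂ^d` is a domain with the Liouville Property, `z₀ ∈ D`, and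
`(Dₙ)` is an exhaustion of `D` with `z₀ ∈ D₁`, then `γₙ(z) → 0` for every `z ∈ D`
(with `γₙ(z)` defined as soon as `z ∈ Dₙ`). -/
theorem stmt11 (d : ℕ) (D : Set (Cd d)) (hD : IsOpen D) (hDconn : IsConnected D)
    (hL : LiouvilleProperty D) (z₀ : Cd d) (hz₀ : z₀ ∈ D)
    (Dn : ℕ → Set (Cd d)) (hex : IsExhaustion Dn D) (hz₀1 : z₀ ∈ Dn 0) :
    ∀ z ∈ D, ∀ ε : ℝ, 0 < ε → ∃ N : ℕ, ∀ n : ℕ, N ≤ n →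
      z ∈ Dn n ∧ gammaFn (Dn n) z₀ z < ε := by
  obtain ⟨hopen, hcomp, hcl, hunion⟩ := hex
  have hmono : ∀ m n, m ≤ n → Dn m ⊆ Dn n := by
    intro m n hmn
    induction hmn with
    | refl => exact subset_rfl
    | step h ih => exact ih.trans (subset_closure.trans (hcl _))
  have hDnD : ∀ n, Dn n ⊆ D := fun n => by
    rw [← hunion]; exact Set.subset_iUnion Dn n
  intro z hz ε hε
  classical
  by_contra hcon
  push_neg at hcon
  obtain ⟨m₀, hm₀⟩ : ∃ m, z ∈ Dn m := by
    rw [← hunion] at hz; exact Set.mem_iUnion.mp hz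
  -- step 1: extract witnesses
  have key : ∀ n, ∃ f : Cd d → ℂ, DifferentiableOn ℂ f (Dn n) ∧ f z₀ = 0 ∧
      (∀ w ∈ Dn n, ‖f w‖ ≤ 1) ∧ ε/2 < ‖f z‖ := by
    intro n
    obtain ⟨n', hn', hg⟩ := hcon (max n m₀)
    have hzn' : z ∈ Dn n' := hmono m₀ n' ((le_max_right _ _).trans hn') hm₀
    have hge : ε ≤ gammaFn (Dn n') z₀ z := hg hzn'
    unfold gammaFn at hge
    have hne : {t : ℝ | ∃ f : Cd d → ℂ, DifferentiableOn ℂ f (Dn n') ∧ f z₀ = 0 ∧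
        (∀ w ∈ Dn n', ‖f w‖ ≤ 1) ∧ t = ‖f z‖}.Nonempty := by
      refine ⟨0, fun _ => 0, differentiableOn_const 0, rfl, fun w _ => by simp, by simp⟩
    obtain ⟨t, ht, hlt⟩ := exists_lt_of_lt_csSup hne ((half_lt_self hε).trans_le hge)
    obtain ⟨f, hfd, hf0, hfb, rfl⟩ := ht
    have hsubn : Dn n ⊆ Dn n' := hmono n n' ((le_max_left _ _).trans hn')
    exact ⟨f, hfd.mono hsubn, hf0, fun w hw => hfb w (hsubn hw), hlt⟩
  choose F hFd hF0 hFb hFz using key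
  -- step 2: ultrafilter limit
  set 𝒰 : Ultrafilter ℕ := Ultrafilter.of atTop with h𝒰def
  have h𝒰 : (𝒰 : Filter ℕ) ≤ atTop := Ultrafilter.of_le _
  have hbd : ∀ w ∈ D, ∀ᶠ n in (𝒰 : Filter ℕ), F n w ∈ closedBall (0:ℂ) 1 := by
    intro w hw
    rw [← hunion] at hw
    obtain ⟨m, hm⟩ := Set.mem_iUnion.mp hw
    filter_upwards [(eventually_ge_atTop m).filter_mono h𝒰] with n hn
    simpa [mem_closedBall_zero_iff] using hFb n w (hmono m n hn hm)
  have hex1 : ∀ w, w ∈ D → ∃ x : ℂ, Tendsto (fun n => F n w) 𝒰 (𝓝 x) :=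
    fun w hw => myULim (isCompact_closedBall 0 1) (hbd w hw)
  set f : Cd d → ℂ := fun w =>
    if h : ∃ x : ℂ, Tendsto (fun n => F n w) 𝒰 (𝓝 x) then h.choose else 0 with hfdef
  have hft : ∀ w ∈ D, Tendsto (fun n => F n w) 𝒰 (𝓝 (f w)) := by
    intro w hw
    have h := hex1 w hw
    simp only [hfdef, dif_pos h]
    exact h.choose_spec
  set g' : Cd d → (Cd d →L[ℂ] ℂ) := fun w =>
    if h : ∃ L, Tendsto (fun n => fderiv ℂ (F n) w) 𝒰 (𝓝 L) then h.choose else 0 with hg'def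
  have hg't : ∀ w, (∃ L, Tendsto (fun n => fderiv ℂ (F n) w) 𝒰 (𝓝 L)) →
      Tendsto (fun n => fderiv ℂ (F n) w) 𝒰 (𝓝 (g' w)) := by
    intro w h
    simp only [hg'def, dif_pos h]
    exact h.choose_spec
  haveI hps : ProperSpace (Cd d →L[ℂ] ℂ) := FiniteDimensional.proper ℂ _
  -- step 3: f is differentiable on D
  have hdiff : DifferentiableOn ℂ f D := by
    intro x hx
    obtain ⟨r', hr'0, hr'D⟩ := (Metric.nhds_basis_closedBall.mem_iff).mp (hD.mem_nhds hx)
    set r := r'/2 with hrdef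
    have hr0 : 0 < r := by positivity
    have h2r : closedBall x (2*r) ⊆ D := by
      have : 2*r = r' := by rw [hrdef]; ring
      rw [this]; exact hr'D
    obtain ⟨m, hm⟩ := myCompactSub hopen hmono hunion (isCompact_closedBall x (2*r)) h2r
    have hball2D : ball x (2*r) ⊆ D := ball_subset_closedBall.trans h2r
    have hFdiff : ∀ n, m ≤ n → DifferentiableOn ℂ (F n) (ball x (2*r)) :=
      fun n hn => (hFd n).mono ((ball_subset_closedBall.trans hm).trans (hmono m n hn))
    have hFbd : ∀ n, m ≤ n → ∀ w ∈ ball x (2*r), ‖F n w‖ ≤ 1 :=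
      fun n hn w hw => hFb n w (hmono m n hn (hm (ball_subset_closedBall hw)))
    have hevge : ∀ᶠ n in (𝒰 : Filter ℕ), m ≤ n := (eventually_ge_atTop m).filter_mono h𝒰
    have hsubyr : ∀ y ∈ closedBall x r, ball y r ⊆ ball x (2*r) := by
      intro y hy w hw
      have h1 : dist w y < r := mem_ball.mp hw
      have h2 : dist y x ≤ r := mem_closedBall.mp hy
      have := dist_triangle w y x
      simp only [mem_ball]
      linarith
    -- uniform convergence of F on closedBall x r
    have hTU : TendstoUniformlyOn F f 𝒰 (closedBall x r) := by
      refine myNet (isCompact_closedBall x r) hr0 (by positivity : (0:ℝ) ≤ 3/r) ?_ ?_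
      · filter_upwards [hevge] with n hn y hy y' hy' hdist
        have hyy : ‖y' - y‖ < r := by rwa [dist_eq_norm, norm_sub_rev] at hdist
        have := myLip hr0 (hFdiff n hn) (hFbd n hn) (hsubyr y hy) hyy
        rw [dist_comm (F n y)]
        calc dist (F n y') (F n y) ≤ (2*1+1)/r * ‖y' - y‖ := this
          _ = 3/r * dist y y' := by rw [dist_eq_norm, norm_sub_rev]; ring_nf
      · exact fun y hy => hft y (hball2D (hsubyr y hy (mem_ball_self hr0)))
    have hUC : UniformCauchySeqOn F 𝒰 (closedBall x r) := hTU.uniformCauchySeqOn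
    -- derivatives uniformly Cauchy on closedBall x (r/2)
    have hsubyr2 : ∀ y ∈ closedBall x (r/2), ball y (r/2) ⊆ closedBall x r := by
      intro y hy w hw
      have h1 : dist w y < r/2 := mem_ball.mp hw
      have h2 : dist y x ≤ r/2 := mem_closedBall.mp hy
      have := dist_triangle w y x
      simp only [mem_closedBall]
      linarith
    have hsubyr2' : ∀ y ∈ closedBall x (r/2), ball y (r/2) ⊆ ball x (2*r) := by
      intro y hy
      exact (hsubyr2 y hy).trans (closedBall_subset_ball (by linarith))
    have hUC' : UniformCauchySeqOn (fun n => fderiv ℂ (F n)) 𝒰 (closedBall x (r/2)) := by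
      intro u hu
      obtain ⟨η, hη, hballu⟩ := Metric.mem_uniformity_dist.mp hu
      have hcau := hUC _ (Metric.dist_mem_uniformity (show 0 < η*(r/2)/4 by positivity))
      filter_upwards [hcau, hevge.prod_mk hevge] with p hp hpm y hy
      apply hballu
      have hd1 : DifferentiableAt ℂ (F p.1) y :=
        (hFdiff p.1 hpm.1).differentiableAt
          (isOpen_ball.mem_nhds (hsubyr2' y hy (mem_ball_self (by positivity))))
      have hd2 : DifferentiableAt ℂ (F p.2) y :=
        (hFdiff p.2 hpm.2).differentiableAt
          (isOpen_ball.mem_nhds (hsubyr2' y hy (mem_ball_self (by positivity))))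
      have hdh : DifferentiableOn ℂ (fun w => F p.1 w - F p.2 w) (ball y (r/2)) :=
        ((hFdiff p.1 hpm.1).mono (hsubyr2' y hy)).sub ((hFdiff p.2 hpm.2).mono (hsubyr2' y hy))
      have hbh : ∀ w ∈ ball y (r/2), ‖F p.1 w - F p.2 w‖ ≤ η*(r/2)/4 := by
        intro w hw
        have h' := hp w (hsubyr2 y hy hw)
        simp only [Set.mem_setOf_eq, dist_eq_norm] at h'
        exact h'.le
      have hbound := myFderivBound (by positivity : (0:ℝ) < r/2)
        (by positivity : (0:ℝ) ≤ η*(r/2)/4) hdh hbh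
      have heq : fderiv ℂ (fun w => F p.1 w - F p.2 w) y = fderiv ℂ (F p.1) y - fderiv ℂ (F p.2) y :=
        fderiv_sub hd1 hd2
      rw [dist_eq_norm, ← heq]
      calc ‖fderiv ℂ (fun w => F p.1 w - F p.2 w) y‖ ≤ 2*(η*(r/2)/4)/(r/2) := hbound
        _ = η/2 := by field_simp; ring
        _ < η := by linarith
    -- pointwise convergence of derivatives
    have hptd : ∀ y ∈ closedBall x (r/2),
        Tendsto (fun n => fderiv ℂ (F n) y) 𝒰 (𝓝 (g' y)) := by
      intro y hy
      refine hg't y (myULim (isCompact_closedBall (0 : Cd d →L[ℂ] ℂ) (2/(r/2))) ?_)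
      filter_upwards [hevge] with n hn
      rw [mem_closedBall_zero_iff]
      have := myFderivBound (by positivity : (0:ℝ) < r/2) (zero_le_one)
        ((hFdiff n hn).mono (hsubyr2' y hy)) (fun w hw => hFbd n hn w (hsubyr2' y hy hw))
      calc ‖fderiv ℂ (F n) y‖ ≤ 2*1/(r/2) := this
        _ = 2/(r/2) := by ring
    have hTU' : TendstoUniformlyOn (fun n => fderiv ℂ (F n)) g' 𝒰 (closedBall x (r/2)) :=
      hUC'.tendstoUniformlyOn_of_tendsto hptd
    -- derivative of the limit
    have hmain : HasFDerivAt f (g' x) x := by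
      have h1 : TendstoUniformlyOnFilter (fun n w => fderiv ℂ (F n) w) g' (𝒰 : Filter ℕ) (𝓝 x) :=
        (tendstoUniformlyOn_iff_tendstoUniformlyOnFilter.mp hTU').mono_right
          (le_principal_iff.mpr (closedBall_mem_nhds x (by positivity)))
      have hxev : ∀ᶠ y in 𝓝 x, y ∈ ball x (2*r) :=
        isOpen_ball.mem_nhds (mem_ball_self (by positivity))
      have h2 : ∀ᶠ (p : ℕ × Cd d) in (𝒰 : Filter ℕ) ×ˢ 𝓝 x,
          HasFDerivAt (F p.1) (fderiv ℂ (F p.1) p.2) p.2 := by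
        filter_upwards [hevge.prod_mk hxev] with p hp
        exact ((hFdiff p.1 hp.1).differentiableAt (isOpen_ball.mem_nhds hp.2)).hasFDerivAt
      have h3 : ∀ᶠ y in 𝓝 x, Tendsto (fun n => F n y) (𝒰 : Filter ℕ) (𝓝 (f y)) := by
        filter_upwards [hxev] with y hy
        exact hft y (hball2D hy)
      exact hasFDerivAt_of_tendstoUniformlyOnFilter h1 h2 h3
    exact hmain.differentiableAt.differentiableWithinAt
  -- step 4: contradiction via Liouville
  have hfb : ∀ w ∈ D, ‖f w‖ ≤ 1 := by
    intro w hw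
    refine le_of_tendsto (hft w hw).norm ?_
    filter_upwards [hbd w hw] with n hn using mem_closedBall_zero_iff.mp hn
  have h0 : f z₀ = 0 := by
    refine tendsto_nhds_unique (hft z₀ hz₀) ?_
    simp only [hF0]
    exact tendsto_const_nhds
  have hlow : ε/2 ≤ ‖f z‖ :=
    ge_of_tendsto (hft z hz).norm (Filter.Eventually.of_forall fun n => (hFz n).le)
  have hconst := hL f hdiff ⟨1, hfb⟩ z hz z₀ hz₀
  rw [hconst, h0, norm_zero] at hlow
  linarith
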